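/- arXiv:1510.07140 — 2 statements merged into one kernel-verified Lean document; each statement's English description precedes it below -/
import Mathlib

section
/- Product (ℓ,p)-Gowers–Cauchy–Schwarz: let e be a nonempty finite index set, ℓ ≥ 2 an even integer, 1 ≤ p < ∞, and for each ω ∈ {0,…,ℓ-1}^e let f_ω ∈ L_p(X_e). Then E[∏_{ω ∈ {0,…,ℓ-1}^e} |f_ω|^p(x_e^{(ω)}) | x_e^{(0)},…,x_e^{(ℓ-1)} ∈ X_e] ≤ ∏_{ω ∈ {0,…,ℓ-1}^e} ‖f_ω‖_{□_{ℓ,p}(X_e)}^p. -/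
open MeasureTheory Finset

/-- The `ℓ`-box norm over the coordinates in `e` of a function `f` on the product
of the probability spaces `(X i, μ i)`. -/
noncomputable def boxNormOn {ι : Type*} [Fintype ι] [DecidableEq ι] {X : ι → Type*}
    [∀ i, MeasurableSpace (X i)] (μ : ∀ i, Measure (X i))
    (e : Finset ι) (ℓ : ℕ) (f : (∀ i, X i) → ℝ) : ℝ :=
  (∫ x : ∀ i, Fin ℓ → X i,
      ∏ ω ∈ Finset.univ.filter (fun ω : ι → Fin ℓ => ∀ i ∉ e, (ω i : ℕ) = 0),
        f (fun i => x i (ω i))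
    ∂(Measure.pi fun i => Measure.pi fun _ : Fin ℓ => μ i)) ^ (((ℓ : ℝ) ^ e.card)⁻¹)


/-- The `(ℓ,p)`-box norm, `‖f‖_{□_{ℓ,p}} = ‖|f|^p‖_{□_ℓ}^{1/p}`. -/
noncomputable def pBoxNormOn {ι : Type*} [Fintype ι] [DecidableEq ι] {X : ι → Type*}
    [∀ i, MeasurableSpace (X i)] (μ : ∀ i, Measure (X i))
    (e : Finset ι) (ℓ : ℕ) (p : ℝ) (f : (∀ i, X i) → ℝ) : ℝ :=
  (boxNormOn μ e ℓ (fun x => |f x| ^ p)) ^ p⁻¹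

open scoped ENNReal
set_option linter.unusedSectionVars false

section helpers

variable {δ : Type*} [Fintype δ] [DecidableEq δ] {π : δ → Type*}
  [∀ i, MeasurableSpace (π i)]

/-- Fubini for lintegrals on a finite product: product of single-coordinate functions. -/
theorem my_lintegral_pi_prod (μ : ∀ i, Measure (π i)) [∀ i, SigmaFinite (μ i)]
    [Nonempty (∀ i, π i)] (h : ∀ i, π i → ℝ≥0∞) (hm : ∀ i, Measurable (h i)) :
    ∫⁻ x, ∏ i, h i (x i) ∂Measure.pi μ = ∏ i, ∫⁻ y, h i y ∂μ i := by
  have x₀ : ∀ i, π i := Classical.arbitrary _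
  have hF : Measurable fun y : ∀ i, π i => ∏ i, h i (y i) :=
    Finset.measurable_prod _ fun i _ => (hm i).comp (measurable_pi_apply i)
  have claim : ∀ s : Finset δ, ∀ x, (∫⋯∫⁻_s, (fun y => ∏ i, h i (y i)) ∂μ) x
      = (∏ i ∈ s, ∫⁻ y, h i y ∂μ i) * ∏ i ∈ sᶜ, h i (x i) := by
    intro s
    induction s using Finset.induction with
    | empty => intro x; simp
    | insert _ _ hi =>
      rename_i i s ih
      intro x
      rw [MeasureTheory.lmarginal_insert _ hF hi x]
      have hsplit : ∀ xi : π i, (∫⋯∫⁻_s, (fun y => ∏ i, h i (y i)) ∂μ) (Function.update x i xi)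
          = ((∏ k ∈ s, ∫⁻ y, h k y ∂μ k) * ∏ k ∈ (insert i s)ᶜ, h k (x k)) * h i xi := by
        intro xi
        rw [ih]
        have : sᶜ = insert i (insert i s)ᶜ := by
          rw [Finset.compl_insert, Finset.insert_erase]
          simpa using hi
        rw [this, Finset.prod_insert (by simp)]
        have : ∀ k ∈ (insert i s)ᶜ, h k (Function.update x i xi k) = h k (x k) := by
          intro k hk
          have : k ≠ i := by
            intro e; subst e; simp [Finset.mem_compl] at hk
          rw [Function.update_of_ne this]
        rw [Finset.prod_congr rfl this, Function.update_self]
        ring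
      simp_rw [hsplit]
      rw [lintegral_const_mul _ (hm i), Finset.prod_insert hi]
      ring
  rw [MeasureTheory.lintegral_eq_lmarginal_univ x₀, claim univ x₀]
  simp

/-- Hölder's inequality for a `Fin ℓ`-indexed product of lintegrals. -/
theorem my_lintegral_prod_fin_le {α : Type*} [MeasurableSpace α] (m : Measure α)
    (ℓ : ℕ) (hℓ : 0 < ℓ) (u : Fin ℓ → α → ℝ≥0∞) (hu : ∀ a, Measurable (u a)) :
    ∫⁻ x, ∏ a, u a x ∂m ≤ ∏ a, (∫⁻ x, u a x ^ (ℓ : ℕ) ∂m) ^ ((ℓ : ℝ)⁻¹) := by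
  have hℓR : ((ℓ : ℝ)) ≠ 0 := Nat.cast_ne_zero.mpr hℓ.ne'
  have := ENNReal.lintegral_prod_norm_pow_le (μ := m) Finset.univ
    (f := fun a x => u a x ^ (ℓ : ℕ))
    (hf := fun a _ => ((hu a).pow_const _).aemeasurable)
    (p := fun _ => (ℓ : ℝ)⁻¹) ?_ (fun _ _ => by positivity)
  · refine le_trans (le_of_eq (lintegral_congr fun x => Finset.prod_congr rfl
      fun a _ => ?_)) this
    simp only [← ENNReal.rpow_natCast, ← ENNReal.rpow_mul, mul_inv_cancel₀ hℓR,
      ENNReal.rpow_one]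
  · simp [Finset.sum_const, hℓR]

/-- reindexing: product over all `ω` and all values `a` of `h (update ω j a)`. -/
theorem my_prod_update_reindex {M : Type*} [CommMonoid M] {ι : Type*} [Fintype ι]
    [DecidableEq ι] (ℓ : ℕ) (j : ι) (h : (ι → Fin ℓ) → M) :
    ∏ ω : ι → Fin ℓ, ∏ a : Fin ℓ, h (Function.update ω j a)
      = ∏ ω : ι → Fin ℓ, (h ω) ^ ℓ := by
  classical
  have key : ∀ (b a : Fin ℓ) (ρ : {j' // j' ≠ j} → Fin ℓ),
      Function.update ((Equiv.funSplitAt j (Fin ℓ)).symm (b, ρ)) j a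
        = (Equiv.funSplitAt j (Fin ℓ)).symm (a, ρ) := by
    intro b a ρ
    funext i
    rcases eq_or_ne i j with rfl | hij
    · simp [Equiv.funSplitAt, Equiv.piSplitAt]
    · simp [Equiv.funSplitAt, Equiv.piSplitAt, hij, Function.update_of_ne hij]
  set e := (Equiv.funSplitAt j (Fin ℓ)).symm with he
  calc ∏ ω : ι → Fin ℓ, ∏ a : Fin ℓ, h (Function.update ω j a)
      = ∏ p : Fin ℓ × ({j' // j' ≠ j} → Fin ℓ), ∏ a, h (Function.update (e p) j a) :=
        (Equiv.prod_comp e _).symm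
    _ = ∏ b : Fin ℓ, ∏ ρ : {j' // j' ≠ j} → Fin ℓ, ∏ a, h (e (a, ρ)) := by
        rw [Fintype.prod_prod_type]
        exact Finset.prod_congr rfl fun b _ => Finset.prod_congr rfl fun ρ _ =>
          Finset.prod_congr rfl fun a _ => by rw [he, key]
    _ = ∏ _b : Fin ℓ, ∏ p : Fin ℓ × ({j' // j' ≠ j} → Fin ℓ), h (e p) := by
        refine Finset.prod_congr rfl fun b _ => ?_
        rw [Fintype.prod_prod_type]
        exact Finset.prod_comm
    _ = (∏ p : Fin ℓ × ({j' // j' ≠ j} → Fin ℓ), h (e p)) ^ ℓ := by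
        rw [Finset.prod_const, Finset.card_univ, Fintype.card_fin]
    _ = (∏ ω : ι → Fin ℓ, h ω) ^ ℓ := by rw [Equiv.prod_comp e h]
    _ = ∏ ω : ι → Fin ℓ, (h ω) ^ ℓ := (Finset.prod_pow _ _ _).symm

end helpers

section core

variable {ι : Type*} [Fintype ι] [DecidableEq ι] {X : ι → Type*} [∀ i, MeasurableSpace (X i)]

/-- merge two tuples: use `ω` on `s`, `ω'` off `s`. -/
def myMrg (ℓ : ℕ) (s : Finset ι) (ω ω' : ι → Fin ℓ) : ι → Fin ℓ :=
  fun i => if i ∈ s then ω i else ω' i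

/-- the integrand of the partially symmetrized box-type quantity. -/
noncomputable def myJf (ℓ : ℕ) (G : (ι → Fin ℓ) → (∀ i, X i) → ℝ≥0∞) (s : Finset ι) (ω : ι → Fin ℓ) :
    (∀ i, Fin ℓ → X i) → ℝ≥0∞ :=
  fun x => ∏ ω' : ι → Fin ℓ, G (myMrg ℓ s ω ω') (fun i => x i (ω' i))

/-- the partially symmetrized box-type quantity. -/
noncomputable def myJ (μ : ∀ i, Measure (X i)) (ℓ : ℕ)
    (G : (ι → Fin ℓ) → (∀ i, X i) → ℝ≥0∞) (s : Finset ι) (ω : ι → Fin ℓ) : ℝ≥0∞ :=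
  ∫⁻ x, myJf ℓ G s ω x ∂(Measure.pi fun i => Measure.pi fun _ : Fin ℓ => μ i)

/-- the sliced integrand at coordinate `j`. -/
noncomputable def myKappa (ℓ : ℕ) (G : (ι → Fin ℓ) → (∀ i, X i) → ℝ≥0∞) (j : ι) (s : Finset ι)
    (ω : ι → Fin ℓ) (a : Fin ℓ) (x : ∀ i, Fin ℓ → X i) (z : X j) : ℝ≥0∞ :=
  ∏ ω' ∈ Finset.univ.filter (fun ω' : ι → Fin ℓ => ω' j = a),
    G (myMrg ℓ s ω ω') (fun i => Function.update x j (fun _ => z) i (ω' i))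

variable {ℓ : ℕ} {G : (ι → Fin ℓ) → (∀ i, X i) → ℝ≥0∞}

theorem myJf_measurable (hG : ∀ ω, Measurable (G ω)) (s : Finset ι) (ω : ι → Fin ℓ) :
    Measurable (myJf ℓ G s ω) :=
  Finset.measurable_prod _ fun ω' _ => (hG _).comp <| measurable_pi_lambda _ fun i =>
    (measurable_pi_apply (ω' i)).comp (measurable_pi_apply i)

theorem myKappa_measurable (hG : ∀ ω, Measurable (G ω)) (j : ι) (s : Finset ι)
    (ω : ι → Fin ℓ) (a : Fin ℓ) :
    Measurable (fun q : (∀ i, Fin ℓ → X i) × X j => myKappa ℓ G j s ω a q.1 q.2) := by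
  refine Finset.measurable_prod _ fun ω' _ => (hG _).comp <| measurable_pi_lambda _ fun i => ?_
  have h0 : Measurable fun q : (∀ i, Fin ℓ → X i) × (Fin ℓ → X j) =>
      Function.update q.1 j q.2 := measurable_update' (X := fun i => Fin ℓ → X i) (a := j)
  have h1 : Measurable fun q : (∀ i, Fin ℓ → X i) × X j =>
      Function.update q.1 j (fun _ => q.2) :=
    h0.comp (measurable_fst.prodMk (measurable_pi_lambda _ fun _ => measurable_snd))
  exact (measurable_pi_apply (ω' i)).comp ((measurable_pi_apply i).comp h1)

/-- identity (A): slicing the integrand at coordinate `j`. -/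
theorem myJf_update (s : Finset ι) (ω : ι → Fin ℓ) (j : ι) (x : ∀ i, Fin ℓ → X i)
    (y : Fin ℓ → X j) :
    myJf ℓ G s ω (Function.update x j y) = ∏ a : Fin ℓ, myKappa ℓ G j s ω a x (y a) := by
  rw [myJf, ← Finset.prod_fiberwise Finset.univ (fun ω' : ι → Fin ℓ => ω' j)
    (fun ω' => G (myMrg ℓ s ω ω') (fun i => Function.update x j y i (ω' i)))]
  refine Finset.prod_congr rfl fun a _ => Finset.prod_congr rfl fun ω' hω' => ?_
  have ha : ω' j = a := (Finset.mem_filter.mp hω').2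
  congr 1
  funext i
  rcases eq_or_ne i j with rfl | hij
  · simp [ha]
  · simp [Function.update_of_ne hij]

/-- identity (B): slicing the `insert j s`-integrand at coordinate `j`. -/
theorem myJf_insert_update (s : Finset ι) (ω : ι → Fin ℓ) {j : ι} (hj : j ∉ s) (a : Fin ℓ)
    (x : ∀ i, Fin ℓ → X i) (y : Fin ℓ → X j) :
    myJf ℓ G (insert j s) (Function.update ω j a) (Function.update x j y)
      = ∏ b : Fin ℓ, myKappa ℓ G j s ω a x (y b) := by
  rw [myJf, ← Finset.prod_fiberwise Finset.univ (fun ω' : ι → Fin ℓ => ω' j)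
    (fun ω' => G (myMrg ℓ (insert j s) (Function.update ω j a) ω')
      (fun i => Function.update x j y i (ω' i)))]
  refine Finset.prod_congr rfl fun b _ => ?_
  refine Finset.prod_nbij' (fun ω' => Function.update ω' j a)
    (fun ω' => Function.update ω' j b) ?_ ?_ ?_ ?_ ?_
  · intro ω' _; simp
  · intro ω' _; simp
  · intro ω' hω'
    have hb : ω' j = b := by simpa using hω'
    funext i
    rcases eq_or_ne i j with rfl | hij
    · simp [hb]
    · simp [Function.update_of_ne hij]
  · intro ω' hω'
    have ha' : ω' j = a := by simpa using hω'
    funext i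
    rcases eq_or_ne i j with rfl | hij
    · simp [ha']
    · simp [Function.update_of_ne hij]
  · intro ω' hω'
    have hb : ω' j = b := by simpa using hω'
    congr 1
    · funext i
      rcases eq_or_ne i j with rfl | hij
      · simp [myMrg, hj]
      · rcases (em (i ∈ s)) with hs | hs <;>
          simp [myMrg, hij, hs, Function.update_of_ne hij]
    · funext i
      rcases eq_or_ne i j with rfl | hij
      · simp [hb]
      · simp [Function.update_of_ne hij]

theorem myJ_def (μ : ∀ i, Measure (X i)) (s : Finset ι) (ω : ι → Fin ℓ) :
    myJ μ ℓ G s ω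
      = ∫⁻ x, myJf ℓ G s ω x ∂(Measure.pi fun i => Measure.pi fun _ : Fin ℓ => μ i) := rfl

theorem myJ_step (μ : ∀ i, Measure (X i)) [∀ i, IsProbabilityMeasure (μ i)]
    [∀ i, Nonempty (X i)] (hℓ : 0 < ℓ) (hG : ∀ ω, Measurable (G ω))
    {j : ι} {s : Finset ι} (hj : j ∉ s) (ω : ι → Fin ℓ) :
    myJ μ ℓ G s ω
      ≤ ∏ a : Fin ℓ, (myJ μ ℓ G (insert j s) (Function.update ω j a)) ^ ((ℓ : ℝ)⁻¹) := by
  have x₀ : ∀ i, Fin ℓ → X i := Classical.arbitrary _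
  set L : Fin ℓ → (∀ i, Fin ℓ → X i) → ℝ≥0∞ :=
    fun a x => ∫⁻ z, myKappa ℓ G j s ω a x z ∂μ j with hLdef
  have hL : ∀ a, Measurable (L a) := fun a =>
    Measurable.lintegral_prod_right (myKappa_measurable hG j s ω a)
  have hκm : ∀ (a : Fin ℓ) (x : ∀ i, Fin ℓ → X i),
      Measurable (fun z => myKappa ℓ G j s ω a x z) := fun a x =>
    (myKappa_measurable hG j s ω a).comp (measurable_const.prodMk measurable_id)
  have hinner : ∀ x, (∫⁻ y, myJf ℓ G s ω (Function.update x j y)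
      ∂(Measure.pi fun _ : Fin ℓ => μ j)) = ∏ a, L a x := by
    intro x
    simp_rw [myJf_update s ω j x]
    exact my_lintegral_pi_prod (fun _ : Fin ℓ => μ j)
      (fun a z => myKappa ℓ G j s ω a x z) (fun a => hκm a x)
  have hinner2 : ∀ (a : Fin ℓ) x, (∫⁻ y, myJf ℓ G (insert j s) (Function.update ω j a)
      (Function.update x j y) ∂(Measure.pi fun _ : Fin ℓ => μ j)) = (L a x) ^ (ℓ : ℕ) := by
    intro a x
    simp_rw [myJf_insert_update s ω hj a x]
    rw [my_lintegral_pi_prod (fun _ : Fin ℓ => μ j)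
      (fun _ z => myKappa ℓ G j s ω a x z) (fun _ => hκm a x)]
    simp [hLdef]
  calc myJ μ ℓ G s ω
      = (∫⋯∫⁻_Finset.univ, myJf ℓ G s ω ∂(fun i => Measure.pi fun _ : Fin ℓ => μ i)) x₀ :=
        lintegral_eq_lmarginal_univ x₀
    _ = (∫⋯∫⁻_(Finset.univ.erase j), (fun x => ∫⁻ y, myJf ℓ G s ω (Function.update x j y)
          ∂(Measure.pi fun _ : Fin ℓ => μ j)) ∂(fun i => Measure.pi fun _ : Fin ℓ => μ i)) x₀ := by
        rw [← lmarginal_erase' _ (myJf_measurable hG s ω) (Finset.mem_univ j)]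
    _ = (∫⋯∫⁻_(Finset.univ.erase j), (fun x => ∏ a, L a x)
          ∂(fun i => Measure.pi fun _ : Fin ℓ => μ i)) x₀ := by
        rw [funext hinner]
    _ ≤ ∏ a : Fin ℓ, ((∫⋯∫⁻_(Finset.univ.erase j), (fun x => (L a x) ^ (ℓ : ℕ))
          ∂(fun i => Measure.pi fun _ : Fin ℓ => μ i)) x₀) ^ ((ℓ : ℝ)⁻¹) :=
        my_lintegral_prod_fin_le _ ℓ hℓ
          (fun a y => L a (Function.updateFinset x₀ (Finset.univ.erase j) y))
          (fun a => (hL a).comp measurable_updateFinset)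
    _ = ∏ a : Fin ℓ, (myJ μ ℓ G (insert j s) (Function.update ω j a)) ^ ((ℓ : ℝ)⁻¹) := by
        refine Finset.prod_congr rfl fun a _ => ?_
        congr 1
        have h1 : (fun x => (L a x) ^ (ℓ : ℕ))
            = fun x => ∫⁻ y, myJf ℓ G (insert j s) (Function.update ω j a)
                (Function.update x j y) ∂(Measure.pi fun _ : Fin ℓ => μ j) :=
          funext fun x => (hinner2 a x).symm
        rw [h1, ← lmarginal_erase' _ (myJf_measurable hG _ _) (Finset.mem_univ j)]
        exact (lintegral_eq_lmarginal_univ x₀).symm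

end core
section core2

variable {ι : Type*} [Fintype ι] [DecidableEq ι] {X : ι → Type*} [∀ i, MeasurableSpace (X i)]
  {ℓ : ℕ} {G : (ι → Fin ℓ) → (∀ i, X i) → ℝ≥0∞}

set_option maxHeartbeats 1000000 in
theorem myJ_fold (μ : ∀ i, Measure (X i)) [∀ i, IsProbabilityMeasure (μ i)]
    [∀ i, Nonempty (X i)] (hℓ : 0 < ℓ) (hG : ∀ ω, Measurable (G ω))
    {j : ι} {s : Finset ι} (hj : j ∉ s) :
    ∏ ω : ι → Fin ℓ, (myJ μ ℓ G s ω) ^ (((ℓ : ℝ) ^ Fintype.card ι)⁻¹)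
      ≤ ∏ ω : ι → Fin ℓ, (myJ μ ℓ G (insert j s) ω) ^ (((ℓ : ℝ) ^ Fintype.card ι)⁻¹) := by
  have hℓR : ((ℓ : ℝ)) ≠ 0 := Nat.cast_ne_zero.mpr hℓ.ne'
  have hNinv : (0:ℝ) ≤ ((ℓ : ℝ) ^ Fintype.card ι)⁻¹ := by positivity
  calc ∏ ω : ι → Fin ℓ, (myJ μ ℓ G s ω) ^ (((ℓ : ℝ) ^ Fintype.card ι)⁻¹)
      ≤ ∏ ω : ι → Fin ℓ, (∏ a : Fin ℓ, (myJ μ ℓ G (insert j s) (Function.update ω j a))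
          ^ ((ℓ : ℝ)⁻¹)) ^ (((ℓ : ℝ) ^ Fintype.card ι)⁻¹) :=
        Finset.prod_le_prod' fun ω _ =>
          ENNReal.rpow_le_rpow (myJ_step μ hℓ hG hj ω) hNinv
    _ = ∏ ω : ι → Fin ℓ, ∏ a : Fin ℓ, (myJ μ ℓ G (insert j s) (Function.update ω j a))
          ^ ((ℓ : ℝ)⁻¹ * ((ℓ : ℝ) ^ Fintype.card ι)⁻¹) := by
        refine Finset.prod_congr rfl fun ω _ => ?_
        rw [← ENNReal.prod_rpow_of_nonneg hNinv]
        refine Finset.prod_congr rfl fun a _ => ?_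
        rw [← ENNReal.rpow_mul]
    _ = ∏ ω : ι → Fin ℓ, ((myJ μ ℓ G (insert j s) ω)
          ^ ((ℓ : ℝ)⁻¹ * ((ℓ : ℝ) ^ Fintype.card ι)⁻¹)) ^ (ℓ : ℕ) :=
        my_prod_update_reindex ℓ j
          (fun τ => myJ μ ℓ G (insert j s) τ ^ ((ℓ : ℝ)⁻¹ * ((ℓ : ℝ) ^ Fintype.card ι)⁻¹))
    _ = ∏ ω : ι → Fin ℓ, (myJ μ ℓ G (insert j s) ω) ^ (((ℓ : ℝ) ^ Fintype.card ι)⁻¹) := by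
        refine Finset.prod_congr rfl fun ω _ => ?_
        rw [← ENNReal.rpow_natCast _ ℓ, ← ENNReal.rpow_mul]
        congr 1
        rw [mul_comm ((ℓ : ℝ)⁻¹) _, mul_assoc, inv_mul_cancel₀ hℓR, mul_one]

/-- Gowers–Cauchy–Schwarz at the level of lower integrals. -/
theorem my_gcs_lintegral (μ : ∀ i, Measure (X i)) [∀ i, IsProbabilityMeasure (μ i)]
    [∀ i, Nonempty (X i)] (hℓ : 0 < ℓ) (hG : ∀ ω, Measurable (G ω)) :
    (∫⁻ x : ∀ i, Fin ℓ → X i, ∏ ω : ι → Fin ℓ, G ω (fun i => x i (ω i))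
        ∂(Measure.pi fun i => Measure.pi fun _ : Fin ℓ => μ i))
      ≤ ∏ ω : ι → Fin ℓ, (∫⁻ x : ∀ i, Fin ℓ → X i, ∏ ω' : ι → Fin ℓ, G ω (fun i => x i (ω' i))
          ∂(Measure.pi fun i => Measure.pi fun _ : Fin ℓ => μ i))
          ^ (((ℓ : ℝ) ^ Fintype.card ι)⁻¹) := by
  have hℓR : ((ℓ : ℝ)) ≠ 0 := Nat.cast_ne_zero.mpr hℓ.ne'
  have hNne : ((ℓ : ℝ) ^ Fintype.card ι) ≠ 0 := by positivity
  have key : ∀ s : Finset ι,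
      ∏ ω : ι → Fin ℓ, (myJ μ ℓ G ∅ ω) ^ (((ℓ : ℝ) ^ Fintype.card ι)⁻¹)
        ≤ ∏ ω : ι → Fin ℓ, (myJ μ ℓ G s ω) ^ (((ℓ : ℝ) ^ Fintype.card ι)⁻¹) := by
    intro s
    induction s using Finset.induction with
    | empty => exact le_refl _
    | insert _ _ hj =>
      rename_i j' s' ih
      exact ih.trans (myJ_fold μ hℓ hG hj)
  have hempty : ∀ ω : ι → Fin ℓ, myJ μ ℓ G ∅ ω
      = ∫⁻ x : ∀ i, Fin ℓ → X i, ∏ ω' : ι → Fin ℓ, G ω' (fun i => x i (ω' i))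
        ∂(Measure.pi fun i => Measure.pi fun _ : Fin ℓ => μ i) := by
    intro ω
    rw [myJ_def]
    refine lintegral_congr fun x => ?_
    simp only [myJf]
    exact Finset.prod_congr rfl fun ω' _ =>
      congrFun (congrArg G (funext fun i => by simp [myMrg])) _
  have huniv : ∀ ω : ι → Fin ℓ, myJ μ ℓ G Finset.univ ω
      = ∫⁻ x : ∀ i, Fin ℓ → X i, ∏ ω' : ι → Fin ℓ, G ω (fun i => x i (ω' i))
        ∂(Measure.pi fun i => Measure.pi fun _ : Fin ℓ => μ i) := by
    intro ω
    rw [myJ_def]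
    refine lintegral_congr fun x => ?_
    simp only [myJf]
    exact Finset.prod_congr rfl fun ω' _ =>
      congrFun (congrArg G (funext fun i => by simp [myMrg])) _
  have hLHS : (∫⁻ x : ∀ i, Fin ℓ → X i, ∏ ω : ι → Fin ℓ, G ω (fun i => x i (ω i))
      ∂(Measure.pi fun i => Measure.pi fun _ : Fin ℓ => μ i))
      = ∏ ω : ι → Fin ℓ, (myJ μ ℓ G ∅ ω) ^ (((ℓ : ℝ) ^ Fintype.card ι)⁻¹) := by
    simp_rw [hempty]
    rw [Finset.prod_const, Finset.card_univ, Fintype.card_fun, Fintype.card_fin,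
      ← ENNReal.rpow_natCast _ (ℓ ^ Fintype.card ι), ← ENNReal.rpow_mul,
      Nat.cast_pow, inv_mul_cancel₀ hNne, ENNReal.rpow_one]
  rw [hLHS]
  refine (key Finset.univ).trans (le_of_eq ?_)
  exact Finset.prod_congr rfl fun ω _ => by rw [huniv]

end core2
section evalmp

theorem my_measurePreserving_eval {α : Type*} [MeasurableSpace α] (m : Measure α)
    [IsProbabilityMeasure m] (ℓ : ℕ) (a : Fin ℓ) :
    MeasurePreserving (Function.eval a) (Measure.pi fun _ : Fin ℓ => m) m := by
  refine ⟨measurable_pi_apply a, ?_⟩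
  refine Measure.ext fun s hs => ?_
  rw [Measure.map_apply (measurable_pi_apply a) hs]
  have hpre : (Function.eval a) ⁻¹' s
      = Set.pi Set.univ (Function.update (fun _ : Fin ℓ => (Set.univ : Set α)) a s) := by
    ext v
    simp only [Set.mem_preimage, Set.mem_pi, Set.mem_univ, true_implies]
    constructor
    · intro h b
      rcases eq_or_ne b a with rfl | hb
      · simpa using h
      · simp [Function.update_of_ne hb]
    · intro h
      simpa using h a
  rw [hpre, Measure.pi_pi]
  rw [Finset.prod_eq_single a (fun b _ hb => by simp [Function.update_of_ne hb])
    (fun h => absurd (Finset.mem_univ a) h)]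
  simp

theorem my_measurePreserving_comp {ι : Type*} [Fintype ι] {X : ι → Type*}
    [∀ i, MeasurableSpace (X i)] (μ : ∀ i, Measure (X i)) [∀ i, IsProbabilityMeasure (μ i)]
    (ℓ : ℕ) (ω' : ι → Fin ℓ) :
    MeasurePreserving (fun x : ∀ i, Fin ℓ → X i => fun i => x i (ω' i))
      (Measure.pi fun i => Measure.pi fun _ : Fin ℓ => μ i) (Measure.pi μ) :=
  MeasureTheory.measurePreserving_pi _ _ (fun i => my_measurePreserving_eval (μ i) ℓ (ω' i))

end evalmp

/-- Product Gowers–Cauchy–Schwarz for `p`-th powers and `(ℓ,p)`-box norms. -/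
theorem gowers_cauchy_schwarz_pow {ι : Type*} [Fintype ι] [DecidableEq ι] [Nonempty ι]
    {X : ι → Type*} [∀ i, MeasurableSpace (X i)] (μ : ∀ i, Measure (X i))
    [∀ i, IsProbabilityMeasure (μ i)]
    (ℓ : ℕ) (hℓ : 2 ≤ ℓ) (hev : Even ℓ)
    (p : ℝ) (hp : 1 ≤ p)
    (f : (ι → Fin ℓ) → (∀ i, X i) → ℝ)
    (hf : ∀ ω, MemLp (f ω) (ENNReal.ofReal p) (Measure.pi μ))
    (hbox : ∀ ω : ι → Fin ℓ, Integrable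
      (fun x : ∀ i, Fin ℓ → X i => ∏ ω' : ι → Fin ℓ, |f ω (fun i => x i (ω' i))| ^ p)
      (Measure.pi fun i => Measure.pi fun _ : Fin ℓ => μ i)) :
    (∫ x : ∀ i, Fin ℓ → X i, ∏ ω : ι → Fin ℓ, |f ω (fun i => x i (ω i))| ^ p
        ∂(Measure.pi fun i => Measure.pi fun _ : Fin ℓ => μ i)) ≤
      ∏ ω : ι → Fin ℓ, pBoxNormOn μ Finset.univ ℓ p (f ω) ^ p := by
  classical
  haveI hne : ∀ i, Nonempty (X i) := fun i => by
    by_contra h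
    rw [not_nonempty_iff] at h
    have h1 := measure_univ (μ := μ i)
    rw [Set.univ_eq_empty_iff.mpr h, measure_empty] at h1
    exact zero_ne_one h1
  have hp0 : p ≠ 0 := by positivity
  set ν := (Measure.pi fun i => Measure.pi fun _ : Fin ℓ => μ i) with hν
  set φ : (ι → Fin ℓ) → (∀ i, X i) → ℝ := fun ω => (hf ω).1.mk (f ω) with hφ
  have hφm : ∀ ω, Measurable (φ ω) := fun ω => (hf ω).1.stronglyMeasurable_mk.measurable
  have hφe : ∀ ω, f ω =ᵐ[Measure.pi μ] φ ω := fun ω => (hf ω).1.ae_eq_mk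
  set G : (ι → Fin ℓ) → (∀ i, X i) → ℝ≥0∞ := fun ω y => ENNReal.ofReal (|φ ω y| ^ p)
    with hG
  have hGm : ∀ ω, Measurable (G ω) := fun ω => by
    rw [hG]
    have := hφm ω
    fun_prop
  have hemeas : ∀ ω' : ι → Fin ℓ,
      Measurable (fun x : ∀ i, Fin ℓ → X i => (fun i => x i (ω' i))) := fun ω' =>
    measurable_pi_lambda _ fun i => (measurable_pi_apply (ω' i)).comp (measurable_pi_apply i)
  -- a.e. transfer of `f = φ` along the coordinate maps
  have htrans : ∀ ω ω' : ι → Fin ℓ,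
      (fun x : ∀ i, Fin ℓ → X i => |f ω (fun i => x i (ω' i))| ^ p)
        =ᵐ[ν] (fun x => |φ ω (fun i => x i (ω' i))| ^ p) := by
    intro ω ω'
    have h1 := ((my_measurePreserving_comp μ ℓ ω').quasiMeasurePreserving).ae_eq_comp
      ((hφe ω).fun_comp (fun t : ℝ => |t| ^ p))
    simpa [Function.comp_def] using h1
  have hprodae : ∀ ω : ι → Fin ℓ,
      (fun x : ∀ i, Fin ℓ → X i => ∏ ω' : ι → Fin ℓ, |f ω (fun i => x i (ω' i))| ^ p)
        =ᵐ[ν] fun x => ∏ ω' : ι → Fin ℓ, |φ ω (fun i => x i (ω' i))| ^ p := by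
    intro ω
    have hall : ∀ᵐ x ∂ν, ∀ ω' : ι → Fin ℓ,
        |f ω (fun i => x i (ω' i))| ^ p = |φ ω (fun i => x i (ω' i))| ^ p :=
      (MeasureTheory.ae_all_iff).mpr fun ω' => htrans ω ω'
    exact hall.mono fun x hx => Finset.prod_congr rfl fun ω' _ => hx ω'
  have hdiagae :
      (fun x : ∀ i, Fin ℓ → X i => ∏ ω : ι → Fin ℓ, |f ω (fun i => x i (ω i))| ^ p)
        =ᵐ[ν] fun x => ∏ ω : ι → Fin ℓ, |φ ω (fun i => x i (ω i))| ^ p := by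
    have hall : ∀ᵐ x ∂ν, ∀ ω : ι → Fin ℓ,
        |f ω (fun i => x i (ω i))| ^ p = |φ ω (fun i => x i (ω i))| ^ p :=
      (MeasureTheory.ae_all_iff).mpr fun ω => htrans ω ω
    exact hall.mono fun x hx => Finset.prod_congr rfl fun ω _ => hx ω
  set B : (ι → Fin ℓ) → ℝ≥0∞ :=
    fun ω => ∫⁻ x, ∏ ω' : ι → Fin ℓ, G ω (fun i => x i (ω' i)) ∂ν with hB
  have hofReal : ∀ (ω : ι → Fin ℓ) (x : ∀ i, Fin ℓ → X i),
      ENNReal.ofReal (∏ ω' : ι → Fin ℓ, |φ ω (fun i => x i (ω' i))| ^ p)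
        = ∏ ω' : ι → Fin ℓ, G ω (fun i => x i (ω' i)) := by
    intro ω x
    rw [ENNReal.ofReal_prod_of_nonneg fun ω' _ => by positivity]
  have hofRealdiag : ∀ x : ∀ i, Fin ℓ → X i,
      ENNReal.ofReal (∏ ω : ι → Fin ℓ, |φ ω (fun i => x i (ω i))| ^ p)
        = ∏ ω : ι → Fin ℓ, G ω (fun i => x i (ω i)) := by
    intro x
    rw [ENNReal.ofReal_prod_of_nonneg fun ω' _ => by positivity]
  have hBfin : ∀ ω, B ω ≠ ⊤ := by
    intro ω
    have hInt : Integrable (fun x : ∀ i, Fin ℓ → X i =>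
        ∏ ω' : ι → Fin ℓ, |φ ω (fun i => x i (ω' i))| ^ p) ν :=
      (hbox ω).congr (hprodae ω)
    have h2 := hInt.2
    rw [MeasureTheory.hasFiniteIntegral_def] at h2
    refine ne_of_lt (lt_of_eq_of_lt ?_ h2)
    refine lintegral_congr fun x => ?_
    rw [Real.enorm_eq_ofReal (Finset.prod_nonneg fun ω' _ => by positivity), hofReal ω x]
  have hmain := my_gcs_lintegral (ℓ := ℓ) (G := G) μ (by omega : 0 < ℓ) hGm
  rw [← hν] at hmain
  have hmdiag : Measurable fun x : ∀ i, Fin ℓ → X i =>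
      ∏ ω : ι → Fin ℓ, |φ ω (fun i => x i (ω i))| ^ p := by
    refine Finset.measurable_prod _ fun ω _ => ?_
    have h1 := (hφm ω).comp (hemeas ω)
    fun_prop
  have hmbox : ∀ ω : ι → Fin ℓ, Measurable fun x : ∀ i, Fin ℓ → X i =>
      ∏ ω' : ι → Fin ℓ, |φ ω (fun i => x i (ω' i))| ^ p := by
    intro ω
    refine Finset.measurable_prod _ fun ω' _ => ?_
    have h1 := (hφm ω).comp (hemeas ω')
    fun_prop
  rw [integral_congr_ae hdiagae, integral_eq_lintegral_of_nonneg_ae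
    (Filter.Eventually.of_forall fun x => Finset.prod_nonneg fun ω _ => by positivity)
    hmdiag.aestronglyMeasurable]
  simp_rw [hofRealdiag]
  refine le_trans (ENNReal.toReal_mono ?_ hmain) (le_of_eq ?_)
  · exact ENNReal.prod_ne_top fun ω _ =>
      ENNReal.rpow_ne_top_of_nonneg (by positivity) (hBfin ω)
  · rw [ENNReal.toReal_prod]
    refine Finset.prod_congr rfl fun ω _ => ?_
    rw [← ENNReal.toReal_rpow]
    rw [pBoxNormOn, boxNormOn]
    rw [show (Finset.univ.filter fun ω' : ι → Fin ℓ =>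
        ∀ i ∉ (Finset.univ : Finset ι), ((ω' i : ℕ)) = 0) = Finset.univ from
      Finset.filter_true_of_mem fun ω' _ => fun i hi => absurd (Finset.mem_univ i) hi]
    rw [← hν]
    have hbint : (∫ x : ∀ i, Fin ℓ → X i,
        ∏ ω' : ι → Fin ℓ, |f ω (fun i => x i (ω' i))| ^ p ∂ν) = (B ω).toReal := by
      rw [integral_congr_ae (hprodae ω), integral_eq_lintegral_of_nonneg_ae
        (Filter.Eventually.of_forall fun x => Finset.prod_nonneg fun ω' _ => by positivity)
        (hmbox ω).aestronglyMeasurable]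
      congr 1
      exact lintegral_congr fun x => hofReal ω x
    rw [hbint, Finset.card_univ]
    rw [← Real.rpow_mul (Real.rpow_nonneg ENNReal.toReal_nonneg _),
      inv_mul_cancel₀ hp0, Real.rpow_one]
end

section
/- Hölder step in the proof of the generalized von Neumann theorem: let (X_i, μ_i), i ∈ [n], be probability spaces, let i ∈ [n], let ℓ ≥ 2 be an even integer with conjugate exponent ℓ', let e = {i,j} be an edge, and let G(i) be a finite family of edges containing i but not j. With I_{e,G(i)} := E[∏_{ω=0}^{ℓ-1} f_e(x_i^{(ω)}, x_j) ∏_{e'∈G(i)} f_{e'}(x_i^{(ω)}, x_{e'∖{i}})] and I_{G(i)} := E[∏_{e'∈G(i)} ∏_{ω=0}^{ℓ-1} |f_{e'}|^{ℓ'}(x_i^{(ω)}, x_{e'∖{i}})] (expectations over x_i^{(0)},…,x_i^{(ℓ-1)} ∈ X_i and the remaining coordinates), one has I_{e,G(i)} ≤ ‖f_e‖_{□_ℓ(X_e)}^ℓ · I_{G(i)}^{1/ℓ'}. -/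
open MeasureTheory Finset

section HolderStepAux
open Function
section Helpers

variable {ι : Type*} [Fintype ι] [DecidableEq ι] {Y : ι → Type*}
  [∀ k, MeasurableSpace (Y k)] (ν : ∀ k, Measure (Y k)) [∀ k, IsProbabilityMeasure (ν k)]

lemma mp_eval (q : ι) :
    MeasurePreserving (fun x : ∀ k, Y k => x q) (Measure.pi ν) (ν q) := by
  refine ⟨measurable_pi_apply q, ?_⟩
  ext s hs
  rw [Measure.map_apply (measurable_pi_apply q) hs]
  have : (fun x : ∀ k, Y k => x q) ⁻¹' s
      = Set.pi Set.univ (Function.update (fun k => (Set.univ : Set (Y k))) q s) := by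
    rw [Set.univ_pi_update_univ]
  rw [this, Measure.pi_pi]
  have h1 : ∀ k, k ≠ q → ν k (Function.update (fun k => (Set.univ : Set (Y k))) q s k) = 1 := by
    intro k hk
    rw [Function.update_of_ne hk]
    exact measure_univ
  rw [Fintype.prod_eq_single q h1, Function.update_self]

lemma mp_update (q : ι) :
    MeasurePreserving (fun p : (∀ k, Y k) × Y q => Function.update p.1 q p.2)
      ((Measure.pi ν).prod (ν q)) (Measure.pi ν) := by
  have hmeas : Measurable (fun p : (∀ k, Y k) × Y q => Function.update p.1 q p.2) :=
    measurable_update'.comp (measurable_fst.prodMk measurable_snd)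
  refine ⟨hmeas, ?_⟩
  refine (Measure.pi_eq fun s hs => ?_).symm
  rw [Measure.map_apply hmeas (MeasurableSet.univ_pi hs)]
  have : (fun p : (∀ k, Y k) × Y q => Function.update p.1 q p.2) ⁻¹' (Set.pi Set.univ s)
      = (Set.pi Set.univ (Function.update s q Set.univ)) ×ˢ (s q) := by
    ext p
    simp only [Set.mem_preimage, Set.mem_pi, Set.mem_univ, true_implies, Set.mem_prod]
    constructor
    · intro h
      refine ⟨fun k => ?_, by simpa using h q⟩
      rcases eq_or_ne k q with rfl | hk
      · simp
      · simpa [Function.update_of_ne hk] using h k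
    · rintro ⟨h1, h2⟩ k
      rcases eq_or_ne k q with rfl | hk
      · simpa using h2
      · simpa [Function.update_of_ne hk] using h1 k
  rw [this, Measure.prod_prod, Measure.pi_pi]
  rw [Fintype.prod_eq_prod_compl_mul q, Function.update_self, measure_univ, mul_one]
  rw [Fintype.prod_eq_prod_compl_mul q (fun k => ν k (s k))]
  congr 1
  · exact Finset.prod_congr rfl fun k hk => by
      rw [Function.update_of_ne (by simpa using hk)]

lemma mp_pair {i j : ι} (hij : i ≠ j) :
    MeasurePreserving (fun x : ∀ k, Y k => (x i, x j)) (Measure.pi ν) ((ν i).prod (ν j)) := by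
  have hmeas : Measurable (fun x : ∀ k, Y k => (x i, x j)) :=
    (measurable_pi_apply i).prodMk (measurable_pi_apply j)
  refine ⟨hmeas, ?_⟩
  refine (Measure.prod_eq (μ := ν i) (ν := ν j) fun s t hs ht => ?_).symm
  rw [Measure.map_apply hmeas (hs.prod ht)]
  have : (fun x : ∀ k, Y k => (x i, x j)) ⁻¹' (s ×ˢ t)
      = Set.pi Set.univ (Function.update (Function.update (fun k => (Set.univ : Set (Y k))) i s) j t) := by
    ext x
    simp only [Set.mem_preimage, Set.mem_prod, Set.mem_pi, Set.mem_univ, true_implies]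
    constructor
    · rintro ⟨h1, h2⟩ k
      rcases eq_or_ne k j with rfl | hkj
      · simpa using h2
      rcases eq_or_ne k i with rfl | hki
      · rw [Function.update_of_ne hkj, Function.update_self]; exact h1
      · rw [Function.update_of_ne hkj, Function.update_of_ne hki]; trivial
    · intro h
      refine ⟨?_, by simpa using h j⟩
      have := h i
      rwa [Function.update_of_ne hij, Function.update_self] at this
  rw [this, Measure.pi_pi]
  rw [Fintype.prod_eq_prod_compl_mul j, Function.update_self]
  have : ∀ k ∈ ({j}ᶜ : Finset ι), ν k (Function.update (Function.update (fun k => (Set.univ : Set (Y k))) i s) j t k) = ν k (Function.update (fun k => (Set.univ : Set (Y k))) i s k) := by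
    intro k hk
    rw [Function.update_of_ne (by simpa using hk)]
  rw [Finset.prod_congr rfl this]
  have hi : i ∈ ({j}ᶜ : Finset ι) := by simpa using hij
  rw [← Finset.prod_erase_mul _ _ hi, Function.update_self]
  rw [Finset.prod_congr rfl (fun k hk => by
    rw [Function.update_of_ne (Finset.ne_of_mem_erase hk)])]
  simp [mul_comm]

end Helpers

section Helpers2

variable {ι : Type*} [Fintype ι] [DecidableEq ι] {Y : ι → Type*}
  [∀ k, MeasurableSpace (Y k)] (ν : ∀ k, Measure (Y k)) [∀ k, IsProbabilityMeasure (ν k)]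

lemma mp_sel {J : ι → Type*} [∀ k, Fintype (J k)] (c : ∀ k, J k) :
    MeasurePreserving (fun x : ∀ k, J k → Y k => fun k => x k (c k))
      (Measure.pi fun k => Measure.pi fun _ : J k => ν k) (Measure.pi ν) := by
  have hmeas : Measurable (fun x : ∀ k, J k → Y k => fun k => x k (c k)) :=
    measurable_pi_lambda _ fun k => (measurable_pi_apply (c k)).comp (measurable_pi_apply k)
  refine ⟨hmeas, ?_⟩
  refine (Measure.pi_eq fun s hs => ?_).symm
  rw [Measure.map_apply hmeas (MeasurableSet.univ_pi hs)]
  have : (fun x : ∀ k, J k → Y k => fun k => x k (c k)) ⁻¹' (Set.pi Set.univ s)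
      = Set.pi Set.univ (fun k => (fun y : J k → Y k => y (c k)) ⁻¹' s k) := by
    ext x; simp [Set.mem_pi]
  rw [this, Measure.pi_pi]
  refine Finset.prod_congr rfl fun k _ => ?_
  haveI : DecidableEq (J k) := Classical.decEq _
  have hme := (mp_eval (Y := fun _ : J k => Y k) (fun _ : J k => ν k) (c k)).map_eq
  rw [← Measure.map_apply (measurable_pi_apply (c k)) (hs k), hme]

end Helpers2

section Helpers3

lemma aesm_of_fst {A B : Type*} [MeasurableSpace A] [MeasurableSpace B]
    {α : Measure A} {β : Measure B} [SFinite α] [SFinite β] (hβ : β ≠ 0) {H : A → ℝ}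
    (h : AEStronglyMeasurable (fun p : A × B => H p.1) (α.prod β)) :
    AEStronglyMeasurable H α := by
  obtain ⟨Gm, hGm, hae⟩ := h
  have hsw : MeasurePreserving Prod.swap (β.prod α) (α.prod β) := Measure.measurePreserving_swap
  have h2 : (fun w : B × A => H w.2) =ᵐ[β.prod α] (fun w => Gm (Prod.swap w)) :=
    hsw.quasiMeasurePreserving.ae_eq_comp hae
  have h3 : ∀ᵐ b ∂β, ∀ᵐ a ∂α, H a = Gm (a, b) := Measure.ae_ae_of_ae_prod h2
  have hne : (ae β).NeBot := ae_neBot.mpr hβ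
  obtain ⟨b₀, hb₀⟩ := h3.exists
  exact ⟨fun a => Gm (a, b₀), hGm.comp_measurable measurable_prodMk_right, hb₀⟩

lemma integral_pi_pow {E : Type*} [MeasurableSpace E] (m : Measure E) [SigmaFinite m]
    (ℓ : ℕ) (φ : E → ℝ) :
    ∫ b : Fin ℓ → E, ∏ q, φ (b q) ∂(Measure.pi fun _ => m) = (∫ v, φ v ∂m) ^ ℓ := by
  letI : MeasureSpace E := ⟨m⟩
  have h := MeasureTheory.integral_fintype_prod_eq_pow (𝕜 := ℝ) (ι := Fin ℓ) (μ := m) φ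
  simpa [Fintype.card_fin] using h

end Helpers3

theorem holder_step_meas {n : ℕ} {X : Fin n → Type*}
    [∀ k, MeasurableSpace (X k)] (μ : ∀ k, Measure (X k))
    [∀ k, IsProbabilityMeasure (μ k)]
    (i j : Fin n) (hij : i ≠ j)
    (ℓ : ℕ) (hℓ : 2 ≤ ℓ) (hev : Even ℓ)
    (Gi : Finset (Finset (Fin n))) (hGi : ∀ e' ∈ Gi, i ∈ e' ∧ j ∉ e')
    (f : (∀ k, X k) → ℝ)
    (hfm : StronglyMeasurable f)
    (hfdep : ∀ x y : ∀ k, X k, x i = y i → x j = y j → f x = f y)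
    (g : Finset (Fin n) → (∀ k, X k) → ℝ)
    (hgdep : ∀ e' ∈ Gi, ∀ x y : ∀ k, X k, (∀ k ∈ e', x k = y k) → g e' x = g e' y)
    (hgint : ∀ e' ∈ Gi, Integrable (g e') (Measure.pi μ))
    (hfbox : Integrable
      (fun x : ∀ k, Fin ℓ → X k =>
        ∏ ω ∈ Finset.univ.filter
            (fun ω : Fin n → Fin ℓ => ∀ k ∉ ({i, j} : Finset (Fin n)), (ω k : ℕ) = 0),
          f (fun k => x k (ω k)))
      (Measure.pi fun k => Measure.pi fun _ : Fin ℓ => μ k))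
    (hIe : Integrable
      (fun z : (Fin ℓ → X i) × (∀ k, X k) =>
        ∏ ω : Fin ℓ, (f (Function.update z.2 i (z.1 ω)) *
          ∏ e' ∈ Gi, g e' (Function.update z.2 i (z.1 ω))))
      ((Measure.pi fun _ : Fin ℓ => μ i).prod (Measure.pi μ)))
    (hIG : Integrable
      (fun z : (Fin ℓ → X i) × (∀ k, X k) =>
        ∏ e' ∈ Gi, ∏ ω : Fin ℓ,
          |g e' (Function.update z.2 i (z.1 ω))| ^ ((ℓ : ℝ) / ((ℓ : ℝ) - 1)))
      ((Measure.pi fun _ : Fin ℓ => μ i).prod (Measure.pi μ))) :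
    (∫ z : (Fin ℓ → X i) × (∀ k, X k),
        ∏ ω : Fin ℓ, (f (Function.update z.2 i (z.1 ω)) *
          ∏ e' ∈ Gi, g e' (Function.update z.2 i (z.1 ω)))
      ∂((Measure.pi fun _ : Fin ℓ => μ i).prod (Measure.pi μ))) ≤
      boxNormOn μ {i, j} ℓ f ^ ℓ *
        (∫ z : (Fin ℓ → X i) × (∀ k, X k),
            ∏ e' ∈ Gi, ∏ ω : Fin ℓ,
              |g e' (Function.update z.2 i (z.1 ω))| ^ ((ℓ : ℝ) / ((ℓ : ℝ) - 1))
          ∂((Measure.pi fun _ : Fin ℓ => μ i).prod (Measure.pi μ))) ^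
            (((ℓ : ℝ) / ((ℓ : ℝ) - 1))⁻¹) := by
  classical
  have hℓ1 : (1:ℝ) < (ℓ:ℝ) := by exact_mod_cast lt_of_lt_of_le one_lt_two hℓ
  have hℓ0 : (ℓ:ℝ) ≠ 0 := by positivity
  obtain ⟨x₀⟩ : Nonempty (∀ k, X k) := by
    refine ⟨fun k => ?_⟩
    have h1 : (μ k) Set.univ ≠ 0 := by simp
    exact (nonempty_of_measure_ne_zero h1).some
  set νi := Measure.pi (fun _ : Fin ℓ => μ i) with hνi
  set Pμ := Measure.pi μ with hPμ
  set νj := Measure.pi (fun _ : Fin ℓ => μ j) with hνj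
  set ν := νi.prod Pμ with hν
  -- the two-variable kernel
  set h' : X i × X j → ℝ := fun w => f (Function.update (Function.update x₀ j w.2) i w.1)
    with hh'def
  have hupdmeas : ∀ q : Fin n, Measurable
      (fun p : (∀ k, X k) × X q => Function.update p.1 q p.2) := fun q => measurable_update'
  have hh' : StronglyMeasurable h' := by
    apply hfm.comp_measurable
    exact (hupdmeas i).comp
      (((hupdmeas j).comp (measurable_const.prodMk measurable_snd)).prodMk measurable_fst)
  have hfh : ∀ x : ∀ k, X k, f x = h' (x i, x j) := by
    intro x
    refine hfdep x _ ?_ ?_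
    · rw [Function.update_self]
    · rw [Function.update_of_ne hij.symm, Function.update_self]
  -- main objects
  set G : (Fin ℓ → X i) × (∀ k, X k) → ℝ :=
    fun z => ∏ ω : Fin ℓ, ∏ e' ∈ Gi, g e' (Function.update z.2 i (z.1 ω)) with hGdef
  set F : (Fin ℓ → X i) × (∀ k, X k) → ℝ :=
    fun z => ∏ ω : Fin ℓ, h' (z.1 ω, z.2 j) with hFdef
  set Fb : (Fin ℓ → X i) → ℝ := fun a => ∫ v, ∏ ω : Fin ℓ, h' (a ω, v) ∂(μ j) with hFbdef
  -- refresh maps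
  have hMω : ∀ ω : Fin ℓ, MeasurePreserving
      (fun z : (Fin ℓ → X i) × (∀ k, X k) => Function.update z.2 i (z.1 ω)) ν Pμ := by
    intro ω
    have h1 : MeasurePreserving (fun z : (Fin ℓ → X i) × (∀ k, X k) => (z.2, z.1 ω))
        ν (Pμ.prod (μ i)) :=
      ((MeasurePreserving.id Pμ).prod (mp_eval (fun _ : Fin ℓ => μ i) ω)).comp
        Measure.measurePreserving_swap
    exact (mp_update μ i).comp h1
  -- G invariance under changing the j-coordinate
  have hGinv : ∀ (z : (Fin ℓ → X i) × (∀ k, X k)) (t : X j),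
      G (z.1, Function.update z.2 j t) = G z := by
    intro z t
    refine Finset.prod_congr rfl fun ω _ => Finset.prod_congr rfl fun e' he' => ?_
    refine hgdep e' he' _ _ fun k hk => ?_
    rcases eq_or_ne k i with rfl | hki
    · rw [Function.update_self, Function.update_self]
    · have hkj : k ≠ j := fun hkj => (hGi e' he').2 (hkj ▸ hk)
      simp only [Function.update_of_ne hki, Function.update_of_ne hkj]
  -- pointwise identification of the main integrand
  have hFGpt : ∀ z : (Fin ℓ → X i) × (∀ k, X k),
      (∏ ω : Fin ℓ, (f (Function.update z.2 i (z.1 ω)) *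
          ∏ e' ∈ Gi, g e' (Function.update z.2 i (z.1 ω)))) = F z * G z := by
    intro z
    rw [Finset.prod_mul_distrib]
    congr 1
    refine Finset.prod_congr rfl fun ω _ => ?_
    rw [hfh]
    rw [Function.update_self, Function.update_of_ne hij.symm]
  have hFG : Integrable (fun z => F z * G z) ν :=
    hIe.congr (Filter.Eventually.of_forall hFGpt)
  -- the refresh map on the j coordinate at the level of ν
  have hΦ : MeasurePreserving
      (fun w : ((Fin ℓ → X i) × (∀ k, X k)) × X j => (w.1.1, Function.update w.1.2 j w.2))
      (ν.prod (μ j)) ν := by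
    have h1 := (MeasureTheory.measurePreserving_prodAssoc νi Pμ (μ j))
    have h2 : MeasurePreserving
        (fun w : (Fin ℓ → X i) × ((∀ k, X k) × X j) => (w.1, Function.update w.2.1 j w.2.2))
        (νi.prod (Pμ.prod (μ j))) ν :=
      (MeasurePreserving.id νi).prod (mp_update μ j)
    exact h2.comp h1
  -- Step 1 : integrate out the j coordinate
  have step1 : ∫ z, F z * G z ∂ν = ∫ z, Fb z.1 * G z ∂ν := by
    have hmap := integral_map (f := fun z => F z * G z) hΦ.aemeasurable
      (by rw [hΦ.map_eq]; exact hFG.aestronglyMeasurable)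
    rw [hΦ.map_eq] at hmap
    have hint : Integrable
        (fun w : ((Fin ℓ → X i) × (∀ k, X k)) × X j =>
          F (w.1.1, Function.update w.1.2 j w.2) * G (w.1.1, Function.update w.1.2 j w.2))
        (ν.prod (μ j)) := (hΦ.integrable_comp hFG.aestronglyMeasurable).mpr hFG
    have hfub := integral_prod _ hint
    refine (hmap.trans hfub).trans ?_
    refine integral_congr_ae (Filter.Eventually.of_forall fun z => ?_)
    have : ∀ t : X j, F (z.1, Function.update z.2 j t) * G (z.1, Function.update z.2 j t)
        = (∏ ω : Fin ℓ, h' (z.1 ω, t)) * G z := by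
      intro t
      rw [hGinv]
      congr 1
      refine Finset.prod_congr rfl fun ω _ => ?_
      simp only [hFdef]
      rw [Function.update_self]
    simp only [this]
    rw [MeasureTheory.integral_mul_const]
  -- the box integral
  set S : Finset (Fin n → Fin ℓ) := Finset.univ.filter
      (fun ω : Fin n → Fin ℓ => ∀ k ∉ ({i, j} : Finset (Fin n)), (ω k : ℕ) = 0) with hS
  set PP := Measure.pi (fun k => Measure.pi fun _ : Fin ℓ => μ k) with hPP
  set B : ℝ := ∫ x : ∀ k, Fin ℓ → X k, ∏ ω ∈ S, f (fun k => x k (ω k)) ∂PP with hB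
  haveI : NeZero ℓ := ⟨by omega⟩
  have hreindex : ∀ x : ∀ k, Fin ℓ → X k,
      (∏ ω ∈ S, f (fun k => x k (ω k))) = ∏ pq : Fin ℓ × Fin ℓ, h' (x i pq.1, x j pq.2) := by
    intro x
    refine Finset.prod_bij' (fun ω _ => (ω i, ω j))
      (fun pq _ => fun k => if k = i then pq.1 else if k = j then pq.2 else 0)
      (fun ω hω => Finset.mem_univ _) (fun pq _ => ?_) (fun ω hω => ?_) (fun pq _ => ?_)
      (fun ω hω => ?_)
    · simp only [hS, Finset.mem_filter, Finset.mem_univ, true_and]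
      intro k hk
      have hki : k ≠ i := fun h => hk (by simp [h])
      have hkj : k ≠ j := fun h => hk (by simp [h])
      simp [hki, hkj]
    · funext k
      rcases eq_or_ne k i with rfl | hki
      · simp
      rcases eq_or_ne k j with rfl | hkj
      · simp [hij.symm]
      · simp only [hki, hkj, if_false]
        simp only [hS, Finset.mem_filter, Finset.mem_univ, true_and] at hω
        have := hω k (by simp [hki, hkj])
        exact (Fin.ext (by simpa using this.symm))
    · simp [hij.symm]
    · rw [hfh]
  have hρ : MeasurePreserving (fun x : ∀ k, Fin ℓ → X k => (x i, x j)) PP (νi.prod νj) :=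
    mp_pair (fun k => Measure.pi fun _ : Fin ℓ => μ k) hij
  set K : (Fin ℓ → X i) × (Fin ℓ → X j) → ℝ :=
    fun w => ∏ pq : Fin ℓ × Fin ℓ, h' (w.1 pq.1, w.2 pq.2) with hKdef
  have hKsm : StronglyMeasurable K := by
    refine Finset.stronglyMeasurable_fun_prod _ fun pq _ => ?_
    exact hh'.comp_measurable
      (((measurable_pi_apply pq.1).comp measurable_fst).prodMk
        ((measurable_pi_apply pq.2).comp measurable_snd))
  have hB1 : B = ∫ w, K w ∂(νi.prod νj) := by
    have h1 : B = ∫ x, K ((fun x : ∀ k, Fin ℓ → X k => (x i, x j)) x) ∂PP :=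
      integral_congr_ae (Filter.Eventually.of_forall fun x => hreindex x)
    rw [h1, ← integral_map hρ.aemeasurable (by rw [hρ.map_eq]; exact hKsm.aestronglyMeasurable),
      hρ.map_eq]
  have hKint : Integrable K (νi.prod νj) := by
    refine (hρ.integrable_comp hKsm.aestronglyMeasurable).mp ?_
    exact hfbox.congr (Filter.Eventually.of_forall fun x => hreindex x)
  have hinner : ∀ a : Fin ℓ → X i, (∫ b, K (a, b) ∂νj) = Fb a ^ ℓ := by
    intro a
    have h1 : ∀ b : Fin ℓ → X j, K (a, b) = ∏ q : Fin ℓ, ∏ p : Fin ℓ, h' (a p, b q) := by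
      intro b
      simp only [hKdef]
      rw [Fintype.prod_prod_type' (fun p q => h' (a p, b q))]
      exact Finset.prod_comm
    simp only [h1]
    exact (integral_pi_pow (μ j) ℓ (fun v => ∏ p : Fin ℓ, h' (a p, v))).trans rfl
  have hBval : B = ∫ a, Fb a ^ ℓ ∂νi := by
    rw [hB1, integral_prod _ hKint]
    exact integral_congr_ae (Filter.Eventually.of_forall fun a => hinner a)
  have hFbl_int : Integrable (fun a => Fb a ^ ℓ) νi :=
    (hKint.integral_prod_left).congr (Filter.Eventually.of_forall fun a => hinner a)
  have hBnn : 0 ≤ B := by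
    rw [hBval]; exact integral_nonneg fun a => hev.pow_nonneg _
  -- measurability of Fb
  have hFbsm : StronglyMeasurable Fb := by
    have hD : StronglyMeasurable
        (fun w : (Fin ℓ → X i) × X j => ∏ ω : Fin ℓ, h' (w.1 ω, w.2)) := by
      refine Finset.stronglyMeasurable_fun_prod _ fun ω _ => ?_
      exact hh'.comp_measurable
        (((measurable_pi_apply ω).comp measurable_fst).prodMk measurable_snd)
    exact hD.integral_prod_right'
  have hfst : MeasurePreserving (Prod.fst : (Fin ℓ → X i) × (∀ k, X k) → Fin ℓ → X i) ν νi := by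
    refine ⟨measurable_fst, ?_⟩
    rw [hν, Measure.map_fst_prod]
    simp
  have habs : ∀ y : ℝ, ‖y‖ ^ (ℓ:ℝ) = y ^ ℓ := fun y => by
    rw [Real.rpow_natCast, Real.norm_eq_abs, hev.pow_abs]
  have hFbfst_int : Integrable (fun z : (Fin ℓ → X i) × (∀ k, X k) => Fb z.1 ^ ℓ) ν := by
    have haesm : AEStronglyMeasurable (fun a => Fb a ^ ℓ) νi :=
      ((continuous_pow ℓ).comp_stronglyMeasurable hFbsm).aestronglyMeasurable
    exact (hfst.integrable_comp haesm).mpr hFbl_int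
  have hMemFb : MemLp (fun z : (Fin ℓ → X i) × (∀ k, X k) => Fb z.1)
      (ENNReal.ofReal (ℓ:ℝ)) ν := by
    have haesm : AEStronglyMeasurable (fun z : (Fin ℓ → X i) × (∀ k, X k) => Fb z.1) ν :=
      (hFbsm.comp_measurable measurable_fst).aestronglyMeasurable
    have hne0 : (ENNReal.ofReal (ℓ:ℝ)) ≠ 0 := by
      simp only [ne_eq, ENNReal.ofReal_eq_zero, not_le]; linarith
    have hnetop : (ENNReal.ofReal (ℓ:ℝ)) ≠ ⊤ := ENNReal.ofReal_ne_top
    have h1 : Integrable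
        (fun z : (Fin ℓ → X i) × (∀ k, X k) => ‖Fb z.1‖ ^ (ENNReal.ofReal (ℓ:ℝ)).toReal) ν := by
      rw [ENNReal.toReal_ofReal (by positivity)]
      exact hFbfst_int.congr (Filter.Eventually.of_forall fun z => (habs _).symm)
    refine (memLp_norm_rpow_iff haesm hne0 hnetop).mp ?_
    rw [ENNReal.div_self hne0 hnetop]
    exact memLp_one_iff_integrable.mpr h1
  -- G side
  have hGaesm : AEStronglyMeasurable G ν := by
    refine Finset.aestronglyMeasurable_fun_prod _ fun ω _ => ?_
    refine Finset.aestronglyMeasurable_fun_prod _ fun e' he' => ?_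
    exact ((hgint e' he').aestronglyMeasurable).comp_quasiMeasurePreserving
      (hMω ω).quasiMeasurePreserving
  set q : ℝ := (ℓ:ℝ)/((ℓ:ℝ)-1) with hqdef
  have hqpos : 0 < q := div_pos (by linarith) (by linarith)
  have hGnorm : ∀ z : (Fin ℓ → X i) × (∀ k, X k), ‖G z‖ ^ q
      = ∏ e' ∈ Gi, ∏ ω : Fin ℓ, |g e' (Function.update z.2 i (z.1 ω))| ^ q := by
    intro z
    rw [Real.norm_eq_abs]
    simp only [hGdef]
    rw [Finset.abs_prod]
    rw [← Real.finset_prod_rpow _ _ (fun ω _ => abs_nonneg _) q]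
    have h1 : ∀ ω : Fin ℓ, |∏ e' ∈ Gi, g e' (Function.update z.2 i (z.1 ω))| ^ q
        = ∏ e' ∈ Gi, |g e' (Function.update z.2 i (z.1 ω))| ^ q := by
      intro ω
      rw [Finset.abs_prod]
      exact (Real.finset_prod_rpow _ _ (fun e' _ => abs_nonneg _) q).symm
    rw [Finset.prod_congr rfl fun ω _ => h1 ω]
    exact Finset.prod_comm
  have hGq_int : Integrable
      (fun z : (Fin ℓ → X i) × (∀ k, X k) => ‖G z‖ ^ q) ν :=
    hIG.congr (Filter.Eventually.of_forall fun z => (hGnorm z).symm)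
  have hMemG : MemLp G (ENNReal.ofReal q) ν := by
    have hne0 : (ENNReal.ofReal q) ≠ 0 := by
      simp only [ne_eq, ENNReal.ofReal_eq_zero, not_le]; exact hqpos
    have hnetop : (ENNReal.ofReal q) ≠ ⊤ := ENNReal.ofReal_ne_top
    have h1 : Integrable
        (fun z : (Fin ℓ → X i) × (∀ k, X k) => ‖G z‖ ^ (ENNReal.ofReal q).toReal) ν := by
      rw [ENNReal.toReal_ofReal hqpos.le]
      exact hGq_int
    refine (memLp_norm_rpow_iff hGaesm hne0 hnetop).mp ?_
    rw [ENNReal.div_self hne0 hnetop]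
    exact memLp_one_iff_integrable.mpr h1
  -- Hölder
  have hpq : ((ℓ:ℝ)).HolderConjugate q := by
    have h := Real.HolderConjugate.conjExponent (p := (ℓ:ℝ)) hℓ1
    simpa [Real.conjExponent, hqdef] using h
  have hHold := MeasureTheory.integral_mul_norm_le_Lp_mul_Lq (μ := ν) hpq hMemFb hMemG
  have hLHS1 : ∫ z, Fb z.1 * G z ∂ν ≤ ∫ z, ‖Fb z.1‖ * ‖G z‖ ∂ν := by
    calc ∫ z, Fb z.1 * G z ∂ν ≤ ‖∫ z, Fb z.1 * G z ∂ν‖ := le_abs_self _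
      _ ≤ ∫ z, ‖Fb z.1 * G z‖ ∂ν := norm_integral_le_integral_norm _
      _ = ∫ z, ‖Fb z.1‖ * ‖G z‖ ∂ν := by
          refine integral_congr_ae (Filter.Eventually.of_forall fun z => ?_)
          exact norm_mul _ _
  -- factor identifications
  have hfac1 : ∫ z, ‖Fb z.1‖ ^ (ℓ:ℝ) ∂ν = B := by
    have h1 : ∫ z, ‖Fb z.1‖ ^ (ℓ:ℝ) ∂ν = ∫ z, Fb z.1 ^ ℓ ∂ν :=
      integral_congr_ae (Filter.Eventually.of_forall fun z => habs _)
    have haesm : AEStronglyMeasurable (fun a => Fb a ^ ℓ) νi :=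
      ((continuous_pow ℓ).comp_stronglyMeasurable hFbsm).aestronglyMeasurable
    have h2 := integral_map (f := fun a => Fb a ^ ℓ) hfst.aemeasurable
      (by rw [hfst.map_eq]; exact haesm)
    rw [hfst.map_eq] at h2
    rw [h1, ← h2, ← hBval]
  have hcard : ({i, j} : Finset (Fin n)).card = 2 := by
    rw [Finset.card_insert_of_notMem (by simp [hij]), Finset.card_singleton]
  have hbox : boxNormOn μ {i, j} ℓ f ^ ℓ = B ^ (1 / (ℓ:ℝ)) := by
    have h0 : boxNormOn μ {i, j} ℓ f = B ^ (((ℓ:ℝ) ^ 2)⁻¹) := by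
      unfold boxNormOn
      rw [hcard]
      congr 1
      rw [hB, hPP]
      refine integral_congr_ae (Filter.Eventually.of_forall fun x => ?_)
      refine Finset.prod_congr ?_ fun _ _ => rfl
      ext ω
      simp only [hS, Finset.mem_filter, Finset.mem_univ, true_and]
    rw [h0, ← Real.rpow_natCast (B ^ (((ℓ:ℝ) ^ 2)⁻¹)) ℓ, ← Real.rpow_mul hBnn]
    congr 1
    rw [sq]
    field_simp
  have hfacG : ∫ z, ‖G z‖ ^ q ∂ν
      = ∫ z : (Fin ℓ → X i) × (∀ k, X k),
          ∏ e' ∈ Gi, ∏ ω : Fin ℓ, |g e' (Function.update z.2 i (z.1 ω))| ^ q ∂ν :=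
    integral_congr_ae (Filter.Eventually.of_forall fun z => hGnorm z)
  calc (∫ z : (Fin ℓ → X i) × (∀ k, X k),
        ∏ ω : Fin ℓ, (f (Function.update z.2 i (z.1 ω)) *
          ∏ e' ∈ Gi, g e' (Function.update z.2 i (z.1 ω))) ∂ν)
      = ∫ z, F z * G z ∂ν :=
        integral_congr_ae (Filter.Eventually.of_forall fun z => hFGpt z)
    _ = ∫ z, Fb z.1 * G z ∂ν := step1
    _ ≤ ∫ z, ‖Fb z.1‖ * ‖G z‖ ∂ν := hLHS1
    _ ≤ (∫ z, ‖Fb z.1‖ ^ (ℓ:ℝ) ∂ν) ^ (1 / (ℓ:ℝ)) * (∫ z, ‖G z‖ ^ q ∂ν) ^ (1 / q) := hHold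
    _ = boxNormOn μ {i, j} ℓ f ^ ℓ *
        (∫ z : (Fin ℓ → X i) × (∀ k, X k),
          ∏ e' ∈ Gi, ∏ ω : Fin ℓ, |g e' (Function.update z.2 i (z.1 ω))| ^ q ∂ν) ^ q⁻¹ := by
        rw [hfac1, hbox, hfacG]
        simp only [one_div]

lemma f_transfer {n : ℕ} {X : Fin n → Type*} [∀ k, MeasurableSpace (X k)]
    (μ : ∀ k, Measure (X k)) [∀ k, IsProbabilityMeasure (μ k)]
    {i j : Fin n} (hij : i ≠ j) {f : (∀ k, X k) → ℝ}
    {h0 hm : X i × X j → ℝ} (hfh0 : ∀ x, f x = h0 (x i, x j))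
    (hae : h0 =ᵐ[(μ i).prod (μ j)] hm)
    {Ω : Type*} [MeasurableSpace Ω] {m : Measure Ω} {M : Ω → ∀ k, X k}
    (hM : MeasurePreserving M m (Measure.pi μ)) :
    (fun w => f (M w)) =ᵐ[m] (fun w => hm (M w i, M w j)) := by
  have h1 := ((mp_pair μ hij).comp hM).quasiMeasurePreserving.ae_eq_comp hae
  have h2 : (fun w => f (M w)) = (fun w => h0 (M w i, M w j)) :=
    funext fun w => hfh0 (M w)
  rw [h2]
  exact h1


/-- The Hölder step (Claim 3.3) in the proof of the generalized von Neumann theorem: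
`I_{e,G(i)} ≤ ‖f_e‖_{□_ℓ}^ℓ ⬝ I_{G(i)}^{1/ℓ'}` where `ℓ'` is the conjugate exponent
of `ℓ`.  The expectation is modelled over `ℓ` independent copies `z.1 ω` of the `i`-th
coordinate together with the remaining coordinates `z.2`; `x_i^{(ω)}` is substituted
via `Function.update z.2 i (z.1 ω)`. -/
theorem holder_step {n : ℕ} {X : Fin n → Type*}
    [∀ k, MeasurableSpace (X k)] (μ : ∀ k, Measure (X k))
    [∀ k, IsProbabilityMeasure (μ k)]
    (i j : Fin n) (hij : i ≠ j)
    (ℓ : ℕ) (hℓ : 2 ≤ ℓ) (hev : Even ℓ)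
    (Gi : Finset (Finset (Fin n))) (hGi : ∀ e' ∈ Gi, i ∈ e' ∧ j ∉ e')
    (f : (∀ k, X k) → ℝ)
    (hfdep : ∀ x y : ∀ k, X k, x i = y i → x j = y j → f x = f y)
    (g : Finset (Fin n) → (∀ k, X k) → ℝ)
    (hgdep : ∀ e' ∈ Gi, ∀ x y : ∀ k, X k, (∀ k ∈ e', x k = y k) → g e' x = g e' y)
    (hgint : ∀ e' ∈ Gi, Integrable (g e') (Measure.pi μ))
    (hfint : Integrable f (Measure.pi μ))
    (hfbox : Integrable
      (fun x : ∀ k, Fin ℓ → X k =>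
        ∏ ω ∈ Finset.univ.filter
            (fun ω : Fin n → Fin ℓ => ∀ k ∉ ({i, j} : Finset (Fin n)), (ω k : ℕ) = 0),
          f (fun k => x k (ω k)))
      (Measure.pi fun k => Measure.pi fun _ : Fin ℓ => μ k))
    (hIe : Integrable
      (fun z : (Fin ℓ → X i) × (∀ k, X k) =>
        ∏ ω : Fin ℓ, (f (Function.update z.2 i (z.1 ω)) *
          ∏ e' ∈ Gi, g e' (Function.update z.2 i (z.1 ω))))
      ((Measure.pi fun _ : Fin ℓ => μ i).prod (Measure.pi μ)))
    (hIG : Integrable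
      (fun z : (Fin ℓ → X i) × (∀ k, X k) =>
        ∏ e' ∈ Gi, ∏ ω : Fin ℓ,
          |g e' (Function.update z.2 i (z.1 ω))| ^ ((ℓ : ℝ) / ((ℓ : ℝ) - 1)))
      ((Measure.pi fun _ : Fin ℓ => μ i).prod (Measure.pi μ))) :
    (∫ z : (Fin ℓ → X i) × (∀ k, X k),
        ∏ ω : Fin ℓ, (f (Function.update z.2 i (z.1 ω)) *
          ∏ e' ∈ Gi, g e' (Function.update z.2 i (z.1 ω)))
      ∂((Measure.pi fun _ : Fin ℓ => μ i).prod (Measure.pi μ))) ≤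
      boxNormOn μ {i, j} ℓ f ^ ℓ *
        (∫ z : (Fin ℓ → X i) × (∀ k, X k),
            ∏ e' ∈ Gi, ∏ ω : Fin ℓ,
              |g e' (Function.update z.2 i (z.1 ω))| ^ ((ℓ : ℝ) / ((ℓ : ℝ) - 1))
          ∂((Measure.pi fun _ : Fin ℓ => μ i).prod (Measure.pi μ))) ^
            (((ℓ : ℝ) / ((ℓ : ℝ) - 1))⁻¹) := by
  classical
  obtain ⟨x₀⟩ : Nonempty (∀ k, X k) := by
    refine ⟨fun k => ?_⟩
    have h1 : (μ k) Set.univ ≠ 0 := by simp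
    exact (nonempty_of_measure_ne_zero h1).some
  set νi := Measure.pi (fun _ : Fin ℓ => μ i) with hνi
  set Pμ := Measure.pi μ with hPμ
  set ν := νi.prod Pμ with hν
  set h0 : X i × X j → ℝ := fun w => f (Function.update (Function.update x₀ j w.2) i w.1)
    with hh0def
  have hfh0 : ∀ x : ∀ k, X k, f x = h0 (x i, x j) := by
    intro x
    refine hfdep x _ ?_ ?_
    · rw [Function.update_self]
    · rw [Function.update_of_ne hij.symm, Function.update_self]
  -- `h0` is a.e. strongly measurable
  have hτ : MeasurePreserving
      (fun w : (X i × X j) × (∀ k, X k) =>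
        Function.update (Function.update w.2 j w.1.2) i w.1.1)
      (((μ i).prod (μ j)).prod Pμ) Pμ := by
    have h1 : MeasurePreserving
        (fun w : (X i × X j) × (∀ k, X k) => (w.2, w.1))
        (((μ i).prod (μ j)).prod Pμ) (Pμ.prod ((μ i).prod (μ j))) :=
      Measure.measurePreserving_swap
    have h2 : MeasurePreserving
        (fun w : (∀ k, X k) × (X i × X j) => ((w.1, w.2.2), w.2.1))
        (Pμ.prod ((μ i).prod (μ j))) ((Pμ.prod (μ j)).prod (μ i)) := by
      have ha : MeasurePreserving
          (fun w : (∀ k, X k) × (X i × X j) => (w.1, (w.2.2, w.2.1)))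
          (Pμ.prod ((μ i).prod (μ j))) (Pμ.prod ((μ j).prod (μ i))) :=
        (MeasurePreserving.id Pμ).prod Measure.measurePreserving_swap
      have hb := (MeasureTheory.measurePreserving_prodAssoc Pμ (μ j) (μ i)).symm
        (MeasurableEquiv.prodAssoc (α := (∀ k, X k)) (β := X j) (γ := X i))
      exact hb.comp ha
    have h3 : MeasurePreserving
        (fun w : ((∀ k, X k) × X j) × X i =>
          Function.update (Function.update w.1.1 j w.1.2) i w.2)
        ((Pμ.prod (μ j)).prod (μ i)) Pμ :=
      (mp_update μ i).comp ((mp_update μ j).prod (MeasurePreserving.id (μ i)))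
    exact (h3.comp h2).comp h1
  have haesm0 : AEStronglyMeasurable
      (fun w : (X i × X j) × (∀ k, X k) => h0 w.1) (((μ i).prod (μ j)).prod Pμ) := by
    have h1 : AEStronglyMeasurable
        (fun w : (X i × X j) × (∀ k, X k) =>
          f (Function.update (Function.update w.2 j w.1.2) i w.1.1))
        (((μ i).prod (μ j)).prod Pμ) :=
      hfint.aestronglyMeasurable.comp_quasiMeasurePreserving hτ.quasiMeasurePreserving
    refine h1.congr (Filter.Eventually.of_forall fun w => ?_)
    simp only [hh0def]
    refine hfdep _ _ ?_ ?_
    · rw [Function.update_self, Function.update_self]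
    · rw [Function.update_of_ne hij.symm, Function.update_self,
        Function.update_of_ne hij.symm, Function.update_self]
  have hprodne : ((μ i).prod (μ j)) ≠ 0 := by
    intro h
    have : ((μ i).prod (μ j)) Set.univ = 1 := measure_univ
    rw [h] at this
    simp at this
  have hh0aesm : AEStronglyMeasurable h0 ((μ i).prod (μ j)) := by
    refine aesm_of_fst (β := Pμ) ?_ haesm0
    intro h
    have : Pμ Set.univ = 1 := measure_univ
    rw [h] at this; simp at this
  set hm : X i × X j → ℝ := hh0aesm.mk h0 with hhmdef
  have hmsm : StronglyMeasurable hm := hh0aesm.stronglyMeasurable_mk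
  have hae : h0 =ᵐ[(μ i).prod (μ j)] hm := hh0aesm.ae_eq_mk
  set f' : (∀ k, X k) → ℝ := fun x => hm (x i, x j) with hf'def
  have hf'm : StronglyMeasurable f' :=
    hmsm.comp_measurable ((measurable_pi_apply i).prodMk (measurable_pi_apply j))
  have hf'dep : ∀ x y : ∀ k, X k, x i = y i → x j = y j → f' x = f' y := by
    intro x y h1 h2
    simp only [hf'def, h1, h2]
  -- measure preserving refresh maps
  have hMω : ∀ ω : Fin ℓ, MeasurePreserving
      (fun z : (Fin ℓ → X i) × (∀ k, X k) => Function.update z.2 i (z.1 ω)) ν Pμ := by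
    intro ω
    have h1 : MeasurePreserving (fun z : (Fin ℓ → X i) × (∀ k, X k) => (z.2, z.1 ω))
        ν (Pμ.prod (μ i)) :=
      ((MeasurePreserving.id Pμ).prod (mp_eval (fun _ : Fin ℓ => μ i) ω)).comp
        Measure.measurePreserving_swap
    exact (mp_update μ i).comp h1
  -- a.e. equality of f and f' along the refresh maps
  have hE1 : ∀ᵐ z ∂ν, ∀ ω : Fin ℓ,
      f (Function.update z.2 i (z.1 ω)) = f' (Function.update z.2 i (z.1 ω)) := by
    rw [ae_all_iff]
    intro ω
    exact f_transfer μ hij hfh0 hae (hMω ω)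
  have hE2 : ∀ᵐ x ∂(Measure.pi fun k => Measure.pi fun _ : Fin ℓ => μ k),
      ∀ c : Fin n → Fin ℓ, f (fun k => x k (c k)) = f' (fun k => x k (c k)) := by
    rw [ae_all_iff]
    intro c
    exact f_transfer μ hij hfh0 hae (mp_sel μ c)
  have hE1prod : (fun z : (Fin ℓ → X i) × (∀ k, X k) =>
      ∏ ω : Fin ℓ, (f (Function.update z.2 i (z.1 ω)) *
        ∏ e' ∈ Gi, g e' (Function.update z.2 i (z.1 ω))))
      =ᵐ[ν] (fun z => ∏ ω : Fin ℓ, (f' (Function.update z.2 i (z.1 ω)) *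
        ∏ e' ∈ Gi, g e' (Function.update z.2 i (z.1 ω)))) := by
    refine hE1.mono fun z hz => ?_
    exact Finset.prod_congr rfl fun ω _ => by rw [hz ω]
  have hE2prod : ∀ (T : Finset (Fin n → Fin ℓ)),
      (fun x : ∀ k, Fin ℓ → X k => ∏ ω ∈ T, f (fun k => x k (ω k)))
      =ᵐ[Measure.pi fun k => Measure.pi fun _ : Fin ℓ => μ k]
      (fun x => ∏ ω ∈ T, f' (fun k => x k (ω k))) := by
    intro T
    refine hE2.mono fun x hx => ?_
    exact Finset.prod_congr rfl fun ω _ => hx ω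
  have hfbox' : Integrable
      (fun x : ∀ k, Fin ℓ → X k =>
        ∏ ω ∈ Finset.univ.filter
            (fun ω : Fin n → Fin ℓ => ∀ k ∉ ({i, j} : Finset (Fin n)), (ω k : ℕ) = 0),
          f' (fun k => x k (ω k)))
      (Measure.pi fun k => Measure.pi fun _ : Fin ℓ => μ k) :=
    hfbox.congr (hE2prod _)
  have hIe' : Integrable
      (fun z : (Fin ℓ → X i) × (∀ k, X k) =>
        ∏ ω : Fin ℓ, (f' (Function.update z.2 i (z.1 ω)) *
          ∏ e' ∈ Gi, g e' (Function.update z.2 i (z.1 ω)))) ν :=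
    hIe.congr hE1prod
  have hboxeq : boxNormOn μ {i, j} ℓ f = boxNormOn μ {i, j} ℓ f' := by
    unfold boxNormOn
    congr 1
    refine integral_congr_ae ?_
    have := hE2prod (Finset.univ.filter
      (fun ω : Fin n → Fin ℓ => ∀ k ∉ ({i, j} : Finset (Fin n)), (ω k : ℕ) = 0))
    refine hE2.mono fun x hx => ?_
    exact Finset.prod_congr rfl fun ω _ => hx ω
  calc (∫ z : (Fin ℓ → X i) × (∀ k, X k),
        ∏ ω : Fin ℓ, (f (Function.update z.2 i (z.1 ω)) *
          ∏ e' ∈ Gi, g e' (Function.update z.2 i (z.1 ω))) ∂ν)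
      = ∫ z : (Fin ℓ → X i) × (∀ k, X k),
        ∏ ω : Fin ℓ, (f' (Function.update z.2 i (z.1 ω)) *
          ∏ e' ∈ Gi, g e' (Function.update z.2 i (z.1 ω))) ∂ν :=
        integral_congr_ae hE1prod
    _ ≤ boxNormOn μ {i, j} ℓ f' ^ ℓ *
        (∫ z : (Fin ℓ → X i) × (∀ k, X k),
            ∏ e' ∈ Gi, ∏ ω : Fin ℓ,
              |g e' (Function.update z.2 i (z.1 ω))| ^ ((ℓ : ℝ) / ((ℓ : ℝ) - 1)) ∂ν) ^
            (((ℓ : ℝ) / ((ℓ : ℝ) - 1))⁻¹) :=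
        holder_step_meas μ i j hij ℓ hℓ hev Gi hGi f' hf'm hf'dep g hgdep hgint
          hfbox' hIe' hIG
    _ = boxNormOn μ {i, j} ℓ f ^ ℓ *
        (∫ z : (Fin ℓ → X i) × (∀ k, X k),
            ∏ e' ∈ Gi, ∏ ω : Fin ℓ,
              |g e' (Function.update z.2 i (z.1 ω))| ^ ((ℓ : ℝ) / ((ℓ : ℝ) - 1)) ∂ν) ^
            (((ℓ : ℝ) / ((ℓ : ℝ) - 1))⁻¹) := by rw [hboxeq]

end HolderStepAux
end
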